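/- In the unit-rate growth process on the infinite d-ary tree (each vertex outside the current subtree whose parent is in the subtree is added at rate 1, starting from the root), let B_m be the first time a vertex at distance m from the root is added. Then P{B_m ≤ m/(2ed)} ≤ e^{−m/2}. -/

import Mathlib

open MeasureTheory ProbabilityTheory


lemma aux_nonneg_ae {Ω : Type*} [MeasurableSpace Ω] (Pr : Measure Ω)
    (X : Ω → ℝ)
    (hcdf : ∀ t : ℝ, 0 ≤ t → Pr {ω | X ω ≤ t} = ENNReal.ofReal (1 - Real.exp (-t))) :
    ∀ᵐ ω ∂Pr, 0 ≤ X ω := by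
  have h0 : Pr {ω | X ω ≤ 0} = 0 := by
    simpa using hcdf 0 le_rfl
  filter_upwards [measure_eq_zero_iff_ae_notMem.mp h0] with ω hω
  exact (not_le.mp hω).le

lemma aux_integrable {Ω : Type*} [MeasurableSpace Ω] (Pr : Measure Ω) [IsProbabilityMeasure Pr]
    (X : Ω → ℝ) (hX : Measurable X)
    (hcdf : ∀ t : ℝ, 0 ≤ t → Pr {ω | X ω ≤ t} = ENNReal.ofReal (1 - Real.exp (-t)))
    (θ : ℝ) (hθ : 0 < θ) :
    Integrable (fun ω => Real.exp (-θ * X ω)) Pr := by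
  refine Integrable.mono' (integrable_const 1) ((hX.const_mul (-θ)).exp.aestronglyMeasurable) ?_
  filter_upwards [aux_nonneg_ae Pr X hcdf] with ω hω
  rw [Real.norm_eq_abs, abs_of_pos (Real.exp_pos _)]
  exact Real.exp_le_one_iff.mpr (by nlinarith)

lemma aux_mgf_le {Ω : Type*} [MeasurableSpace Ω] (Pr : Measure Ω) [IsProbabilityMeasure Pr]
    (X : Ω → ℝ) (hX : Measurable X)
    (hcdf : ∀ t : ℝ, 0 ≤ t → Pr {ω | X ω ≤ t} = ENNReal.ofReal (1 - Real.exp (-t)))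
    (θ : ℝ) (hθ : 1 ≤ θ) : mgf X Pr (-θ) ≤ 1 / θ := by
  have hθ0 : 0 < θ := lt_of_lt_of_le one_pos hθ
  have hr0 : 0 < 1 / θ := by positivity
  rw [mgf, integral_eq_lintegral_of_nonneg_ae (Filter.Eventually.of_forall fun ω => (Real.exp_pos _).le)
    ((hX.const_mul (-θ)).exp.aestronglyMeasurable)]
  refine ENNReal.toReal_le_of_le_ofReal hr0.le ?_
  rw [lintegral_eq_lintegral_meas_lt Pr (Filter.Eventually.of_forall fun ω => (Real.exp_pos _).le)
    ((hX.const_mul (-θ)).exp.aemeasurable)]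
  have hsplit : Set.Ioi (0:ℝ) = Set.Ioc 0 1 ∪ Set.Ioi 1 := (Set.Ioc_union_Ioi_eq_Ioi zero_le_one).symm
  rw [hsplit, lintegral_union measurableSet_Ioi (Set.Ioc_disjoint_Ioi_same)]
  have h0 : Pr {ω | X ω ≤ 0} = 0 := by simpa using hcdf 0 le_rfl
  have h2 : ∫⁻ t in Set.Ioi (1:ℝ), Pr {ω | t < Real.exp (-θ * X ω)} = 0 := by
    have hz : ∀ t ∈ Set.Ioi (1:ℝ), Pr {ω | t < Real.exp (-θ * X ω)} ≤ 0 := by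
      intro t ht
      rw [← h0]
      refine measure_mono fun ω hω => ?_
      simp only [Set.mem_setOf_eq] at hω ⊢
      have h1 : (1:ℝ) < Real.exp (-θ * X ω) := lt_trans ht hω
      have := (Real.log_lt_iff_lt_exp (by norm_num : (0:ℝ) < 1)).mpr h1
      simp only [Real.log_one] at this
      nlinarith
    refine le_antisymm ?_ (zero_le)
    calc ∫⁻ t in Set.Ioi (1:ℝ), Pr {ω | t < Real.exp (-θ * X ω)}
        ≤ ∫⁻ _ in Set.Ioi (1:ℝ), 0 := setLIntegral_mono' measurableSet_Ioi hz
      _ = 0 := by simp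
  rw [h2, add_zero]
  set r : ℝ := 1 / θ with hr
  have hb : ∀ t ∈ Set.Ioc (0:ℝ) 1, Pr {ω | t < Real.exp (-θ * X ω)} ≤ ENNReal.ofReal (1 - t ^ r) := by
    intro t ht
    obtain ⟨ht0, ht1⟩ := ht
    have hlog : Real.log t ≤ 0 := Real.log_nonpos ht0.le ht1
    have hs : (0:ℝ) ≤ -Real.log t / θ := div_nonneg (by linarith) hθ0.le
    have hsub : {ω | t < Real.exp (-θ * X ω)} ⊆ {ω | X ω ≤ -Real.log t / θ} := by
      intro ω hω
      simp only [Set.mem_setOf_eq] at hω ⊢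
      have := (Real.log_lt_iff_lt_exp ht0).mpr hω
      rw [le_div_iff₀ hθ0]
      nlinarith
    calc Pr {ω | t < Real.exp (-θ * X ω)} ≤ Pr {ω | X ω ≤ -Real.log t / θ} := measure_mono hsub
      _ = ENNReal.ofReal (1 - Real.exp (-(-Real.log t / θ))) := hcdf _ hs
      _ = ENNReal.ofReal (1 - t ^ r) := by
          rw [Real.rpow_def_of_pos ht0, hr]
          ring_nf
  calc ∫⁻ t in Set.Ioc (0:ℝ) 1, Pr {ω | t < Real.exp (-θ * X ω)}
      ≤ ∫⁻ t in Set.Ioc (0:ℝ) 1, ENNReal.ofReal (1 - t ^ r) := setLIntegral_mono' measurableSet_Ioc hb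
    _ ≤ ENNReal.ofReal r := by
        have hint : IntervalIntegrable (fun t : ℝ => 1 - t ^ r) volume 0 1 :=
          (intervalIntegrable_const).sub (intervalIntegral.intervalIntegrable_rpow' (by linarith))
        have hIoc : IntegrableOn (fun t : ℝ => 1 - t ^ r) (Set.Ioc 0 1) volume := by
          simpa [intervalIntegrable_iff, Set.uIoc_of_le (zero_le_one' ℝ)] using hint
        have hnn : 0 ≤ᵐ[volume.restrict (Set.Ioc (0:ℝ) 1)] fun t : ℝ => 1 - t ^ r := by
          refine (ae_restrict_iff' measurableSet_Ioc).mpr (Filter.Eventually.of_forall ?_)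
          intro t ht
          have h1 : t ^ r ≤ 1 := Real.rpow_le_one ht.1.le ht.2 hr0.le
          simp only [Pi.zero_apply]
          linarith
        rw [← ofReal_integral_eq_lintegral_ofReal hIoc hnn]
        refine ENNReal.ofReal_le_ofReal ?_
        have : ∫ t in Set.Ioc (0:ℝ) 1, (1 - t ^ r) = ∫ t in (0:ℝ)..1, (1 - t ^ r) :=
          (intervalIntegral.integral_of_le zero_le_one).symm
        rw [this, intervalIntegral.integral_sub intervalIntegrable_const
          (intervalIntegral.intervalIntegrable_rpow' (by linarith)),
          integral_rpow (Or.inl (by linarith)), intervalIntegral.integral_const]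
        rw [Real.one_rpow, Real.zero_rpow (by positivity)]
        have hr1 : (0:ℝ) < r + 1 := by positivity
        have hkey : 1 - r ≤ 1 / (r + 1) := by
          rw [le_div_iff₀ hr1]; nlinarith [sq_nonneg r]
        rw [one_div] at hkey
        rw [smul_eq_mul]
        norm_num
        linarith

/-- The unit-rate growth process on the infinite `d`-ary tree: vertices at depth `n ≥ 1` are
encoded as paths `Fin n → Fin d`; each vertex `v` waits an independent `Exp(1)` time `E v`
after its parent is added before being added itself.  Thus the first time `B m` at which a
vertex of depth `m` is added is the infimum over depth-`m` vertices of the sum of the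
waiting times along the path from the root.  Then `P{B_m ≤ m/(2ed)} ≤ e^{-m/2}`. -/
theorem stmt_17 {Ω : Type*} [MeasurableSpace Ω] (Pr : Measure Ω) [IsProbabilityMeasure Pr]
    (d : ℕ) (hd : 2 ≤ d)
    (E : (Σ n : ℕ, (Fin n → Fin d)) → Ω → ℝ) (hEmeas : ∀ v, Measurable (E v))
    (hindep : iIndepFun E Pr)
    (hEdist : ∀ v, ∀ t : ℝ, 0 ≤ t → Pr {ω | E v ω ≤ t} = ENNReal.ofReal (1 - Real.exp (-t)))
    (m : ℕ) (B : Ω → ℝ)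
    (hB : ∀ ω, B ω = ⨅ f : Fin m → Fin d,
      ∑ k : Fin m, E ⟨(k : ℕ) + 1, fun j => f (Fin.castLE k.isLt j)⟩ ω) :
    Pr {ω | B ω ≤ (m : ℝ) / (2 * Real.exp 1 * d)} ≤ ENNReal.ofReal (Real.exp (-(m : ℝ) / 2)) := by
  classical
  have hd0 : (0:ℝ) < d := by exact_mod_cast Nat.lt_of_lt_of_le Nat.zero_lt_two hd
  have he2 : (2:ℝ) ≤ Real.exp 1 := by nlinarith [Real.add_one_le_exp (1:ℝ)]
  set θ : ℝ := Real.exp 1 * d with hθdef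
  have hd2 : (2:ℝ) ≤ (d:ℝ) := by exact_mod_cast hd
  have hθ1 : 1 ≤ θ := by nlinarith
  have hθ0 : 0 < θ := lt_of_lt_of_le one_pos hθ1
  set ε : ℝ := (m : ℝ) / (2 * Real.exp 1 * d) with hεdef
  have hεθ : θ * ε = (m : ℝ) / 2 := by
    rw [hεdef, hθdef]
    field_simp
  let v : (Fin m → Fin d) → Fin m → (Σ n : ℕ, Fin n → Fin d) :=
    fun f k => ⟨(k : ℕ) + 1, fun j => f (Fin.castLE k.isLt j)⟩
  have hvinj : ∀ f, Function.Injective (v f) := by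
    intro f k l h
    have h1 := congrArg Sigma.fst h
    simp only [v] at h1
    exact Fin.ext (by omega)
  let T : (Fin m → Fin d) → Finset (Σ n : ℕ, Fin n → Fin d) :=
    fun f => Finset.univ.map ⟨v f, hvinj f⟩
  let S : (Fin m → Fin d) → Ω → ℝ := fun f => ∑ i ∈ T f, E i
  have hS : ∀ f ω, S f ω = ∑ k : Fin m, E (v f k) ω := by
    intro f ω
    simp only [S, T, Finset.sum_apply, Finset.sum_map, Function.Embedding.coeFn_mk]
  have hc : ∀ f, Pr {ω | S f ω ≤ ε} ≤
      ENNReal.ofReal (Real.exp (θ * ε) * (1 / θ) ^ m) := by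
    intro f
    have hint : ∀ i ∈ T f, Integrable (fun ω => Real.exp (-θ * E i ω)) Pr :=
      fun i _ => aux_integrable Pr (E i) (hEmeas i) (hEdist i) θ hθ0
    have hintS : Integrable (fun ω => Real.exp (-θ * S f ω)) Pr :=
      hindep.integrable_exp_mul_sum hEmeas hint
    have hcher := measure_le_le_exp_mul_mgf (μ := Pr) (X := S f) (t := -θ) ε
      (neg_nonpos.mpr hθ0.le) hintS
    have hmgf : mgf (S f) Pr (-θ) = ∏ i ∈ T f, mgf (E i) Pr (-θ) :=
      hindep.mgf_sum hEmeas (T f)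
    have hprod : ∏ i ∈ T f, mgf (E i) Pr (-θ) ≤ (1 / θ) ^ m := by
      calc ∏ i ∈ T f, mgf (E i) Pr (-θ)
          ≤ ∏ _i ∈ T f, (1 / θ) := Finset.prod_le_prod
            (fun i _ => mgf_nonneg)
            (fun i _ => aux_mgf_le Pr (E i) (hEmeas i) (hEdist i) θ hθ1)
        _ = (1 / θ) ^ m := by
            rw [Finset.prod_const, Finset.card_map, Finset.card_univ, Fintype.card_fin]
    rw [ENNReal.le_ofReal_iff_toReal_le (measure_ne_top _ _) (by positivity)]
    calc (Pr {ω | S f ω ≤ ε}).toReal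
        ≤ Real.exp (-(-θ) * ε) * mgf (S f) Pr (-θ) := hcher
      _ ≤ Real.exp (θ * ε) * (1 / θ) ^ m := by
          rw [neg_neg]
          exact mul_le_mul_of_nonneg_left (hmgf ▸ hprod) (Real.exp_nonneg _)
  haveI : Nonempty (Fin d) := ⟨⟨0, by omega⟩⟩
  have hsub : {ω | B ω ≤ ε} ⊆ ⋃ f : Fin m → Fin d, {ω | S f ω ≤ ε} := by
    intro ω hω
    simp only [Set.mem_setOf_eq] at hω
    rw [hB ω] at hω
    obtain ⟨f, hf⟩ := exists_eq_ciInf_of_finite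
      (f := fun f : Fin m → Fin d => ∑ k : Fin m, E (v f k) ω)
    refine Set.mem_iUnion.mpr ⟨f, ?_⟩
    simp only [Set.mem_setOf_eq]
    rw [hS f ω]
    exact le_trans (le_of_eq hf) hω
  calc Pr {ω | B ω ≤ ε}
      ≤ Pr (⋃ f : Fin m → Fin d, {ω | S f ω ≤ ε}) := measure_mono hsub
    _ ≤ ∑' f : Fin m → Fin d, Pr {ω | S f ω ≤ ε} := measure_iUnion_le _
    _ = ∑ f : Fin m → Fin d, Pr {ω | S f ω ≤ ε} := tsum_fintype _
    _ ≤ ∑ _f : Fin m → Fin d, ENNReal.ofReal (Real.exp (θ * ε) * (1 / θ) ^ m) :=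
        Finset.sum_le_sum fun f _ => hc f
    _ = (d ^ m : ℕ) * ENNReal.ofReal (Real.exp (θ * ε) * (1 / θ) ^ m) := by
        rw [Finset.sum_const, Finset.card_univ, Fintype.card_fun, Fintype.card_fin,
          Fintype.card_fin, nsmul_eq_mul]
    _ ≤ ENNReal.ofReal (Real.exp (-(m : ℝ) / 2)) := by
        rw [← ENNReal.ofReal_natCast, ← ENNReal.ofReal_mul (by positivity)]
        apply ENNReal.ofReal_le_ofReal
        rw [hεθ]
        push_cast
        have hpow : (1 / θ) ^ m = 1 / (Real.exp 1 ^ m * (d:ℝ) ^ m) := by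
          rw [hθdef, div_pow, one_pow, mul_pow]
        rw [hpow]
        have hed : Real.exp 1 ^ m = Real.exp (m : ℝ) := by
          rw [← Real.exp_nat_mul]
          norm_num
        rw [hed]
        have hdm : (0:ℝ) < (d:ℝ) ^ m := by positivity
        have hexpm : (0:ℝ) < Real.exp (m:ℝ) := Real.exp_pos _
        have key : Real.exp (-(m:ℝ)/2) = Real.exp ((m:ℝ)/2) / Real.exp (m:ℝ) := by
          rw [← Real.exp_sub]
          ring_nf
        rw [key]
        apply le_of_eq
        field_simp
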